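/- Let $A$ be a bounded non-positive dg ring. Then $A$ is right dg noetherian (every ascending chain of right dg ideals stabilizes) if and only if $A^0$ is a right noetherian ring and $A^n$ is a finitely generated right $A^0$-module for every $n$. -/

import Mathlib

universe u

open DirectSum

variable {A : Type u} [Ring A] (𝒜 : ℤ → AddSubgroup A) [GradedRing 𝒜] (d : A →+ A)

/-- A right dg ideal of a dg ring: a right ideal which is graded (contains all homogeneous
components of its elements) and closed under the differential. -/
def IsRightDgIdeal (I : AddSubgroup A) : Prop :=
  (∀ x ∈ I, ∀ a : A, x * a ∈ I) ∧
  (∀ x ∈ I, d x ∈ I) ∧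
  (∀ x ∈ I, ∀ i : ℤ, ((DirectSum.decompose 𝒜 x i : 𝒜 i) : A) ∈ I)

/-- A dg ring is right dg noetherian if every ascending chain of right dg ideals
stabilizes. -/
def RightDgNoetherian : Prop :=
  ∀ f : ℕ → AddSubgroup A, Monotone f → (∀ n, IsRightDgIdeal 𝒜 d (f n)) →
    ∃ n, ∀ m, n ≤ m → f m = f n

/-- The degree `n` part `𝒜 n` of a graded ring as a right module over the degree zero
part `𝒜 0` (i.e. a left module over the opposite ring), with action `x • a = x * a`. -/
noncomputable def gradeModule (n : ℤ) : Module (↥(𝒜 0))ᵐᵒᵖ ↥(𝒜 n) :=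
  letI : SMul (↥(𝒜 0))ᵐᵒᵖ ↥(𝒜 n) :=
    ⟨fun r x => ⟨(x : A) * ((r.unop : ↥(𝒜 0)) : A), by
      simpa using SetLike.mul_mem_graded x.2 r.unop.2⟩⟩
  Module.ofMinimalAxioms
    (fun r x y => Subtype.ext (add_mul (x : A) (y : A) _))
    (fun r s x => Subtype.ext (mul_add (x : A) _ _))
    (fun r s x => Subtype.ext (mul_assoc (x : A) _ _).symm)
    (fun x => Subtype.ext (mul_one (x : A)))

set_option linter.unusedSectionVars false

section StatementTwelveAux

theorem Statement12Aux.decompose_mul_of_mem (m i : ℤ) {x : A} (hx : x ∈ 𝒜 m) (a : A) :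
    ((decompose 𝒜 (x * a) i : 𝒜 i) : A) = x * ((decompose 𝒜 a (i - m) : 𝒜 (i - m)) : A) := by
  refine DirectSum.Decomposition.inductionOn 𝒜 (motive := fun a => ((decompose 𝒜 (x * a) i : 𝒜 i) : A) = x * ((decompose 𝒜 a (i - m) : 𝒜 (i - m)) : A)) ?_ ?_ ?_ a
  · simp
  · intro k b
    by_cases h : i = m + k
    · subst h
      rw [DirectSum.decompose_of_mem_same 𝒜 (SetLike.mul_mem_graded hx b.2)]
      have h2 : ((decompose 𝒜 (b : A) (m + k - m) : 𝒜 (m + k - m)) : A) = (b : A) := by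
        have : m + k - m = k := by ring
        rw [this, DirectSum.decompose_coe, DirectSum.of_eq_same]
      rw [h2]
    · rw [DirectSum.decompose_of_mem_ne 𝒜 (SetLike.mul_mem_graded hx b.2) (fun hh => h hh.symm)]
      have h2 : ((decompose 𝒜 (b : A) (i - m) : 𝒜 (i - m)) : A) = 0 := by
        exact DirectSum.decompose_of_mem_ne 𝒜 b.2 (by omega)
      rw [h2, mul_zero]
  · intro b c hb hc
    rw [mul_add, DirectSum.decompose_add, DirectSum.decompose_add]
    push_cast [DirectSum.add_apply]
    rw [hb, hc, mul_add]

namespace Statement12Aux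

/-- The right dg ideal generated by a set of homogeneous cocycles. -/
def dgI (S : Set A) : AddSubgroup A :=
  AddSubgroup.closure {x | ∃ z ∈ S, ∃ a : A, x = z * a}

theorem mem_dgI_self {S : Set A} {z : A} (hz : z ∈ S) : z ∈ dgI S :=
  AddSubgroup.subset_closure ⟨z, hz, 1, (mul_one z).symm⟩

theorem dgI_mono {S T : Set A} (h : S ⊆ T) : dgI S ≤ dgI T :=
  AddSubgroup.closure_mono (fun x ⟨z, hz, a, ha⟩ => ⟨z, h hz, a, ha⟩)

theorem dgI_isRightDgIdeal (n : ℤ) (S : Set A)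
    (hleib : ∀ (i : ℤ) (a b : A), a ∈ 𝒜 i →
      d (a * b) = d a * b + ((((-1 : ℤˣ) ^ i : ℤˣ) : ℤ)) • (a * d b))
    (hS : ∀ z ∈ S, z ∈ 𝒜 n ∧ d z = 0) :
    IsRightDgIdeal 𝒜 d (dgI S) := by
  refine ⟨?_, ?_, ?_⟩
  · intro x hx a
    refine AddSubgroup.closure_induction (fun y hy => ?_) (by simp [zero_mem]) ?_ ?_ hx
    · obtain ⟨z, hz, b, rfl⟩ := hy
      exact AddSubgroup.subset_closure ⟨z, hz, b * a, mul_assoc z b a⟩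
    · intro y w _ _ hy hw
      rw [add_mul]; exact add_mem hy hw
    · intro y _ hy
      rw [neg_mul]; exact neg_mem hy
  · intro x hx
    refine AddSubgroup.closure_induction (fun y hy => ?_) (by simp [zero_mem]) ?_ ?_ hx
    · obtain ⟨z, hz, b, rfl⟩ := hy
      rw [hleib n z b (hS z hz).1, (hS z hz).2, zero_mul, zero_add]
      refine zsmul_mem ?_ _
      exact AddSubgroup.subset_closure ⟨z, hz, d b, rfl⟩
    · intro y w _ _ hy hw
      rw [map_add]; exact add_mem hy hw
    · intro y _ hy
      rw [map_neg]; exact neg_mem hy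
  · intro x hx i
    refine AddSubgroup.closure_induction (fun y hy => ?_) (by simp [zero_mem]) ?_ ?_ hx
    · obtain ⟨z, hz, b, rfl⟩ := hy
      rw [decompose_mul_of_mem 𝒜 n i (hS z hz).1 b]
      exact AddSubgroup.subset_closure ⟨z, hz, _, rfl⟩
    · intro y w _ _ hy hw
      rw [DirectSum.decompose_add]
      push_cast [DirectSum.add_apply]
      exact add_mem hy hw
    · intro y _ hy
      rw [DirectSum.decompose_neg]
      push_cast [DFinsupp.neg_apply]
      exact neg_mem hy

theorem dgI_recover (n : ℤ) (S : Set ↥(𝒜 n)) {x : A} (hx : x ∈ dgI ((↑) '' S)) :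
    letI := gradeModule 𝒜 n
    ((decompose 𝒜 x n : 𝒜 n) : A) ∈
      AddSubgroup.map ((𝒜 n).subtype)
        (Submodule.span (↥(𝒜 0))ᵐᵒᵖ S).toAddSubgroup := by
  letI := gradeModule 𝒜 n
  refine AddSubgroup.closure_induction (fun y hy => ?_) (by simp [zero_mem]) ?_ ?_ hx
  · obtain ⟨z', hz, b, rfl⟩ := hy
    obtain ⟨z, hzS, rfl⟩ := hz
    rw [decompose_mul_of_mem 𝒜 n n z.2 b]
    have h0 : n - n = 0 := by ring
    rw [h0]
    refine ⟨(MulOpposite.op (⟨_, (decompose 𝒜 b 0).2⟩ : ↥(𝒜 0))) • z, ?_, rfl⟩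
    exact Submodule.smul_mem _ _ (Submodule.subset_span hzS)
  · intro y w _ _ hy hw
    rw [DirectSum.decompose_add]
    push_cast [DirectSum.add_apply]
    exact add_mem hy hw
  · intro y _ hy
    rw [DirectSum.decompose_neg]
    push_cast [DFinsupp.neg_apply]
    exact neg_mem hy

theorem d_zero_of_mem_zero (hd1 : ∀ i : ℤ, ∀ a ∈ 𝒜 i, d a ∈ 𝒜 (i + 1))
    (hnonpos : ∀ i : ℤ, 0 < i → 𝒜 i = ⊥) {a : A} (ha : a ∈ 𝒜 0) : d a = 0 := by
  have := hd1 0 a ha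
  rw [zero_add, hnonpos 1 one_pos] at this
  simpa using this

theorem d_mul_of_mem_zero (hd1 : ∀ i : ℤ, ∀ a ∈ 𝒜 i, d a ∈ 𝒜 (i + 1))
    (hleib : ∀ (i : ℤ) (a b : A), a ∈ 𝒜 i →
      d (a * b) = d a * b + ((((-1 : ℤˣ) ^ i : ℤˣ) : ℤ)) • (a * d b))
    (hnonpos : ∀ i : ℤ, 0 < i → 𝒜 i = ⊥)
    (m : ℤ) {x a : A} (hx : x ∈ 𝒜 m) (ha : a ∈ 𝒜 0) : d (x * a) = d x * a := by
  rw [hleib m x a hx, d_zero_of_mem_zero 𝒜 d hd1 hnonpos ha, mul_zero, smul_zero, add_zero]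

end Statement12Aux

end StatementTwelveAux
namespace Statement12Aux

theorem zfg (hleib : ∀ (i : ℤ) (a b : A), a ∈ 𝒜 i →
      d (a * b) = d a * b + ((((-1 : ℤˣ) ^ i : ℤˣ) : ℤ)) • (a * d b))
    (hN : RightDgNoetherian 𝒜 d) (n : ℤ) :
    letI := gradeModule 𝒜 n
    ∀ W : Submodule (↥(𝒜 0))ᵐᵒᵖ ↥(𝒜 n), (∀ y ∈ W, d (y : A) = 0) → W.FG := by
  letI := gradeModule 𝒜 n
  letI : DecidableEq ↥(𝒜 n) := Classical.decEq _
  intro W hW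
  by_contra hfg
  have key : ∀ t : Finset ↥(𝒜 n), (↑t : Set ↥(𝒜 n)) ⊆ (W : Set ↥(𝒜 n)) →
      ∃ z, z ∈ W ∧ z ∉ Submodule.span (↥(𝒜 0))ᵐᵒᵖ (↑t : Set ↥(𝒜 n)) := by
    intro t ht
    by_contra hc
    push_neg at hc
    refine hfg ⟨t, le_antisymm ?_ ?_⟩
    · exact Submodule.span_le.2 ht
    · exact fun z hz => hc z hz
  let T := {t : Finset ↥(𝒜 n) // (↑t : Set ↥(𝒜 n)) ⊆ (W : Set ↥(𝒜 n))}
  let step : T → T := fun t =>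
    ⟨insert (key t.1 t.2).choose t.1, by
      rw [Finset.coe_insert]
      exact Set.insert_subset (key t.1 t.2).choose_spec.1 t.2⟩
  let F : ℕ → T := fun k => step^[k] ⟨∅, by simp⟩
  have hFsucc : ∀ k, F (k + 1) = step (F k) := fun k => Function.iterate_succ_apply' step k _
  let g : ℕ → AddSubgroup A := fun k => dgI ((↑) '' ((F k).1 : Set ↥(𝒜 n)))
  have hmono : Monotone g := by
    refine monotone_nat_of_le_succ fun k => dgI_mono ?_
    rw [hFsucc k]
    exact Set.image_mono (by exact_mod_cast Finset.subset_insert _ _)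
  have hdg : ∀ k, IsRightDgIdeal 𝒜 d (g k) := fun k =>
    dgI_isRightDgIdeal 𝒜 d n _ hleib (by
      rintro z ⟨y, hy, rfl⟩
      exact ⟨y.2, hW y ((F k).2 hy)⟩)
  obtain ⟨k₀, hk₀⟩ := hN g hmono hdg
  set z := (key (F k₀).1 (F k₀).2).choose with hz
  have hzW := (key (F k₀).1 (F k₀).2).choose_spec.1
  have hzns := (key (F k₀).1 (F k₀).2).choose_spec.2
  have hzmem : (z : A) ∈ g (k₀ + 1) := by
    refine mem_dgI_self ⟨z, ?_, rfl⟩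
    rw [hFsucc k₀]
    exact Finset.mem_coe.2 (Finset.mem_insert_self _ _)
  rw [hk₀ (k₀ + 1) (Nat.le_succ _)] at hzmem
  have := dgI_recover 𝒜 n (((F k₀).1 : Set ↥(𝒜 n))) hzmem
  rw [DirectSum.decompose_of_mem_same 𝒜 z.2] at this
  obtain ⟨w, hwmem, hw⟩ := this
  exact hzns (by rwa [show w = z from Subtype.ext hw] at hwmem)

end Statement12Aux
namespace Statement12Aux

theorem stepFG (hd1 : ∀ i : ℤ, ∀ a ∈ 𝒜 i, d a ∈ 𝒜 (i + 1))
    (hleib : ∀ (i : ℤ) (a b : A), a ∈ 𝒜 i →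
      d (a * b) = d a * b + ((((-1 : ℤˣ) ^ i : ℤˣ) : ℤ)) • (a * d b))
    (hnonpos : ∀ i : ℤ, 0 < i → 𝒜 i = ⊥)
    (hN : RightDgNoetherian 𝒜 d) (hR : IsNoetherianRing (↥(𝒜 0))ᵐᵒᵖ) (n : ℤ)
    (hfin : letI := gradeModule 𝒜 (n + 1); Module.Finite (↥(𝒜 0))ᵐᵒᵖ ↥(𝒜 (n + 1))) :
    letI := gradeModule 𝒜 n; Module.Finite (↥(𝒜 0))ᵐᵒᵖ ↥(𝒜 n) := by
  letI := gradeModule 𝒜 n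
  letI := gradeModule 𝒜 (n + 1)
  classical
  -- coercion facts for the scalar action
  have hsmul : ∀ (m : ℤ) (r : (↥(𝒜 0))ᵐᵒᵖ) (x : ↥(𝒜 m)),
      letI := gradeModule 𝒜 m
      ((r • x : ↥(𝒜 m)) : A) = (x : A) * ((r.unop : ↥(𝒜 0)) : A) := fun m r x => rfl
  -- the image of `d` in degree `n+1` is a submodule
  let Dsub : Submodule (↥(𝒜 0))ᵐᵒᵖ ↥(𝒜 (n + 1)) :=
    { carrier := {y | ∃ x ∈ 𝒜 n, d x = (y : A)}
      add_mem' := by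
        rintro ⟨ya, hya⟩ ⟨yb, hyb⟩ ⟨xa, hxa, ha⟩ ⟨xb, hxb, hb⟩
        exact ⟨xa + xb, add_mem hxa hxb, by push_cast; rw [map_add, ha, hb]⟩
      zero_mem' := ⟨0, zero_mem _, by simp⟩
      smul_mem' := by
        rintro r ⟨y, hy⟩ ⟨x, hx, hdx⟩
        refine ⟨x * ((r.unop : ↥(𝒜 0)) : A), by simpa using SetLike.mul_mem_graded hx r.unop.2, ?_⟩
        rw [d_mul_of_mem_zero 𝒜 d hd1 hleib hnonpos n hx r.unop.2, hdx, hsmul] }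
  haveI hNoe : IsNoetherian (↥(𝒜 0))ᵐᵒᵖ ↥(𝒜 (n + 1)) :=
    isNoetherian_of_isNoetherianRing_of_finite _ _
  obtain ⟨t, ht⟩ := IsNoetherian.noetherian Dsub
  -- a choice of preimages under `d`
  let v : ↥(𝒜 (n + 1)) → ↥(𝒜 n) := fun y =>
    if h : ∃ x ∈ 𝒜 n, d x = (y : A) then ⟨h.choose, h.choose_spec.1⟩ else 0
  have hv : ∀ y : ↥(𝒜 (n + 1)), y ∈ Dsub → d ((v y : ↥(𝒜 n)) : A) = (y : A) := by
    intro y hy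
    have hvy : v y = ⟨hy.choose, hy.choose_spec.1⟩ := dif_pos hy
    rw [hvy]
    exact hy.choose_spec.2
  letI : DecidableEq ↥(𝒜 (n + 1)) := Classical.decEq _
  letI : DecidableEq ↥(𝒜 n) := Classical.decEq _
  -- every element of the span of `t` is `d` of an element of the span of `t.image v`
  have main : ∀ y : ↥(𝒜 (n + 1)), y ∈ Submodule.span (↥(𝒜 0))ᵐᵒᵖ (↑t : Set ↥(𝒜 (n + 1))) →
      ∃ w ∈ Submodule.span (↥(𝒜 0))ᵐᵒᵖ (↑(t.image v) : Set ↥(𝒜 n)), d ((w : ↥(𝒜 n)) : A) = (y : A) := by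
    intro y hy
    refine Submodule.span_induction (fun y hyt => ?_) ⟨0, zero_mem _, by simp⟩ ?_ ?_ hy
    · refine ⟨v y, Submodule.subset_span ?_, hv y ?_⟩
      · exact Finset.mem_coe.2 (Finset.mem_image_of_mem v hyt)
      · rw [← ht]; exact Submodule.subset_span hyt
    · rintro ya yb _ _ ⟨wa, hwa, ha⟩ ⟨wb, hwb, hb⟩
      exact ⟨wa + wb, add_mem hwa hwb, by push_cast; rw [map_add, ha, hb]⟩
    · rintro r y _ ⟨w, hw, hdw⟩
      refine ⟨r • w, Submodule.smul_mem _ _ hw, ?_⟩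
      rw [hsmul, d_mul_of_mem_zero 𝒜 d hd1 hleib hnonpos n w.2 r.unop.2, hdw, hsmul]
  -- the cocycles form a submodule
  let Zsub : Submodule (↥(𝒜 0))ᵐᵒᵖ ↥(𝒜 n) :=
    { carrier := {y | d (y : A) = 0}
      add_mem' := by
        rintro ya yb ha hb
        show d _ = 0
        push_cast
        rw [map_add, ha, hb, add_zero]
      zero_mem' := by show d _ = 0; simp
      smul_mem' := by
        rintro r y hy
        show d _ = 0
        rw [hsmul, d_mul_of_mem_zero 𝒜 d hd1 hleib hnonpos n y.2 r.unop.2, hy, zero_mul] }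
  have hZ : Zsub.FG := zfg 𝒜 d hleib hN n Zsub (fun y hy => hy)
  have htop : (⊤ : Submodule (↥(𝒜 0))ᵐᵒᵖ ↥(𝒜 n)) =
      Zsub ⊔ Submodule.span (↥(𝒜 0))ᵐᵒᵖ (↑(t.image v) : Set ↥(𝒜 n)) := by
    refine le_antisymm (fun x _ => ?_) le_top
    have hdx : (⟨d (x : A), hd1 n _ x.2⟩ : ↥(𝒜 (n + 1))) ∈ Dsub := ⟨x, x.2, rfl⟩
    rw [← ht] at hdx
    obtain ⟨w, hw, hdw⟩ := main _ hdx
    have hxw : x - w ∈ Zsub := by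
      show d _ = 0
      push_cast
      rw [map_sub, hdw, sub_self]
    have : x = (x - w) + w := by abel
    rw [this]
    exact Submodule.add_mem_sup hxw hw
  rw [Module.finite_def, htop]
  exact Submodule.FG.sup hZ (Submodule.fg_span (Finset.finite_toSet _))

end Statement12Aux
namespace Statement12Aux

theorem finiteCongr (m n : ℤ) (h : m = n)
    (hm : letI := gradeModule 𝒜 m; Module.Finite (↥(𝒜 0))ᵐᵒᵖ ↥(𝒜 m)) :
    letI := gradeModule 𝒜 n; Module.Finite (↥(𝒜 0))ᵐᵒᵖ ↥(𝒜 n) := by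
  subst h; exact hm

theorem finiteZero : letI := gradeModule 𝒜 0; Module.Finite (↥(𝒜 0))ᵐᵒᵖ ↥(𝒜 0) := by
  letI := gradeModule 𝒜 0
  rw [Module.finite_def]
  refine ⟨{1}, le_antisymm le_top fun y _ => ?_⟩
  have : y = (MulOpposite.op y) • (1 : ↥(𝒜 0)) := Subtype.ext (one_mul (y : A)).symm
  rw [this]
  exact Submodule.smul_mem _ _ (Submodule.subset_span (by simp))

theorem allFG (hd1 : ∀ i : ℤ, ∀ a ∈ 𝒜 i, d a ∈ 𝒜 (i + 1))
    (hleib : ∀ (i : ℤ) (a b : A), a ∈ 𝒜 i →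
      d (a * b) = d a * b + ((((-1 : ℤˣ) ^ i : ℤˣ) : ℤ)) • (a * d b))
    (hnonpos : ∀ i : ℤ, 0 < i → 𝒜 i = ⊥)
    (hN : RightDgNoetherian 𝒜 d) (hR : IsNoetherianRing (↥(𝒜 0))ᵐᵒᵖ) :
    ∀ n : ℤ, letI := gradeModule 𝒜 n; Module.Finite (↥(𝒜 0))ᵐᵒᵖ ↥(𝒜 n) := by
  have hnat : ∀ k : ℕ, letI := gradeModule 𝒜 (-(k : ℤ));
      Module.Finite (↥(𝒜 0))ᵐᵒᵖ ↥(𝒜 (-(k : ℤ))) := by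
    intro k
    induction k with
    | zero => exact finiteCongr 𝒜 0 _ (by norm_num) (finiteZero 𝒜)
    | succ k ih =>
        refine stepFG 𝒜 d hd1 hleib hnonpos hN hR (-(k + 1 : ℕ) : ℤ) ?_
        exact finiteCongr 𝒜 (-(k : ℤ)) _ (by push_cast; ring) ih
  intro n
  by_cases h : 0 < n
  · letI := gradeModule 𝒜 n
    haveI : Subsingleton ↥(𝒜 n) := by
      constructor
      rintro ⟨a, ha⟩ ⟨b, hb⟩
      rw [hnonpos n h] at ha hb
      simp only [AddSubgroup.mem_bot] at ha hb
      simp [ha, hb]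
    rw [Module.finite_def]
    exact ⟨∅, Subsingleton.elim _ _⟩
  · exact finiteCongr 𝒜 (-(((-n).toNat : ℕ) : ℤ)) n (by omega) (hnat (-n).toNat)

end Statement12Aux
namespace Statement12Aux

theorem ringNoeth (hd1 : ∀ i : ℤ, ∀ a ∈ 𝒜 i, d a ∈ 𝒜 (i + 1))
    (hleib : ∀ (i : ℤ) (a b : A), a ∈ 𝒜 i →
      d (a * b) = d a * b + ((((-1 : ℤˣ) ^ i : ℤˣ) : ℤ)) • (a * d b))
    (hnonpos : ∀ i : ℤ, 0 < i → 𝒜 i = ⊥)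
    (hN : RightDgNoetherian 𝒜 d) : IsNoetherianRing (↥(𝒜 0))ᵐᵒᵖ := by
  letI := gradeModule 𝒜 0
  rw [isNoetherianRing_iff, ← monotone_stabilizes_iff_noetherian]
  intro f
  let Sset : ℕ → Set ↥(𝒜 0) := fun k => {y | MulOpposite.op y ∈ f k}
  let g : ℕ → AddSubgroup A := fun k => dgI ((↑) '' Sset k)
  have hgmono : Monotone g := fun k l hkl =>
    dgI_mono (Set.image_mono (fun y hy => f.mono hkl hy))
  have hdg : ∀ k, IsRightDgIdeal 𝒜 d (g k) := fun k =>
    dgI_isRightDgIdeal 𝒜 d 0 _ hleib (by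
      rintro z ⟨y, _, rfl⟩
      exact ⟨y.2, d_zero_of_mem_zero 𝒜 d hd1 hnonpos y.2⟩)
  obtain ⟨k₀, hk₀⟩ := hN g hgmono hdg
  refine ⟨k₀, fun m hm => ?_⟩
  refine le_antisymm (f.mono hm) ?_
  intro j hj
  have h1 : ((j.unop : ↥(𝒜 0)) : A) ∈ g m :=
    mem_dgI_self ⟨j.unop, show MulOpposite.op j.unop ∈ f m by simpa using hj, rfl⟩
  rw [hk₀ m hm] at h1
  have h2 := dgI_recover 𝒜 0 (Sset k₀) h1
  rw [DirectSum.decompose_of_mem_same 𝒜 j.unop.2] at h2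
  obtain ⟨w, hw, hweq⟩ := h2
  let Fsub : Submodule (↥(𝒜 0))ᵐᵒᵖ ↥(𝒜 0) :=
    { carrier := {y | MulOpposite.op y ∈ f k₀}
      add_mem' := by
        intro ya yb ha hb
        show MulOpposite.op (ya + yb) ∈ f k₀
        rw [MulOpposite.op_add]
        exact add_mem ha hb
      zero_mem' := by
        show MulOpposite.op (0 : ↥(𝒜 0)) ∈ f k₀
        rw [MulOpposite.op_zero]
        exact zero_mem _
      smul_mem' := by
        intro r y hy
        show MulOpposite.op (r • y) ∈ f k₀
        have : r • y = y * r.unop := Subtype.ext rfl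
        rw [this, MulOpposite.op_mul, MulOpposite.op_unop]
        exact Submodule.smul_mem _ r hy }
  have hle : Submodule.span (↥(𝒜 0))ᵐᵒᵖ (Sset k₀) ≤ Fsub :=
    Submodule.span_le.2 (fun y hy => hy)
  have : w = j.unop := Subtype.ext hweq
  have := hle hw
  rw [‹w = j.unop›] at this
  exact this

theorem backward (hnonpos : ∀ i : ℤ, 0 < i → 𝒜 i = ⊥)
    (hbdd : ∃ N : ℤ, ∀ i : ℤ, i < N → 𝒜 i = ⊥)
    (hR : IsNoetherianRing (↥(𝒜 0))ᵐᵒᵖ)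
    (hF : ∀ n : ℤ, letI := gradeModule 𝒜 n; Module.Finite (↥(𝒜 0))ᵐᵒᵖ ↥(𝒜 n)) :
    RightDgNoetherian 𝒜 d := by
  classical
  obtain ⟨N, hb⟩ := hbdd
  intro f hmono hdg
  have key : ∀ i : ℤ, ∃ K : ℕ, ∀ m, K ≤ m → ∀ y : ↥(𝒜 i), ((y : A) ∈ f K ↔ (y : A) ∈ f m) := by
    intro i
    letI := gradeModule 𝒜 i
    haveI : Module.Finite (↥(𝒜 0))ᵐᵒᵖ ↥(𝒜 i) := hF i
    haveI : IsNoetherian (↥(𝒜 0))ᵐᵒᵖ ↥(𝒜 i) := isNoetherian_of_isNoetherianRing_of_finite _ _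
    let Gsub : ℕ → Submodule (↥(𝒜 0))ᵐᵒᵖ ↥(𝒜 i) := fun k =>
      { carrier := {y | (y : A) ∈ f k}
        add_mem' := by
          intro ya yb ha hb
          show ((ya + yb : ↥(𝒜 i)) : A) ∈ f k
          push_cast
          exact add_mem ha hb
        zero_mem' := by
          show ((0 : ↥(𝒜 i)) : A) ∈ f k
          push_cast
          exact zero_mem _
        smul_mem' := by
          intro r y hy
          show ((r • y : ↥(𝒜 i)) : A) ∈ f k
          exact (hdg k).1 _ hy _ }
    have hGmono : Monotone Gsub := fun k l hkl y hy => hmono hkl hy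
    obtain ⟨K, hK⟩ := monotone_stabilizes_iff_noetherian.2 inferInstance ⟨Gsub, hGmono⟩
    refine ⟨K, fun m hm y => ?_⟩
    have h' : Gsub K = Gsub m := hK m hm
    exact SetLike.ext_iff.mp h' y
  choose K hK using key
  set K₀ := (Finset.Icc N 0).sup K with hK₀def
  refine ⟨K₀, fun m hm => ?_⟩
  refine le_antisymm ?_ (hmono hm)
  intro x hx
  have hsum : (∑ i ∈ (decompose 𝒜 x).support, ((decompose 𝒜 x i : 𝒜 i) : A)) ∈ f K₀ := by
    refine sum_mem fun i _ => ?_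
    have hxi : ((decompose 𝒜 x i : 𝒜 i) : A) ∈ f m := (hdg m).2.2 x hx i
    by_cases hcase : i < N ∨ 0 < i
    · have hbot : 𝒜 i = ⊥ := by
        rcases hcase with h | h
        · exact hb i h
        · exact hnonpos i h
      have h0 : ((decompose 𝒜 x i : 𝒜 i) : A) = 0 := by
        have hmem : ((decompose 𝒜 x i : 𝒜 i) : A) ∈ (⊥ : AddSubgroup A) := by
          rw [← hbot]; exact (decompose 𝒜 x i).2
        simpa using hmem
      rw [h0]
      exact zero_mem _
    · push_neg at hcase
      have hiK : K i ≤ K₀ := Finset.le_sup (Finset.mem_Icc.2 ⟨by omega, by omega⟩)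
      have h1 : ((decompose 𝒜 x i : 𝒜 i) : A) ∈ f (K i) :=
        (hK i m (le_trans hiK hm) _).2 hxi
      exact hmono hiK h1
  rwa [DirectSum.sum_support_decompose 𝒜 x] at hsum

end Statement12Aux

/-- Let `A` be a bounded non-positive dg ring (a `ℤ`-graded ring with a
degree `+1` differential `d` satisfying `d² = 0` and the graded Leibniz rule, with `𝒜 i = 0`
for `i > 0` and for `i ≪ 0`).  Then `A` is right dg noetherian (the ascending chain
condition for right dg ideals) if and only if `𝒜 0` is a right noetherian ring and each
`𝒜 n` is a finitely generated right `𝒜 0`-module. -/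
theorem statement12 {A : Type u} [Ring A] (𝒜 : ℤ → AddSubgroup A) [GradedRing 𝒜]
    (d : A →+ A)
    (hd1 : ∀ i : ℤ, ∀ a ∈ 𝒜 i, d a ∈ 𝒜 (i + 1))
    (hd2 : ∀ a : A, d (d a) = 0)
    (hleib : ∀ (i : ℤ) (a b : A), a ∈ 𝒜 i →
      d (a * b) = d a * b + ((((-1 : ℤˣ) ^ i : ℤˣ) : ℤ)) • (a * d b))
    (hnonpos : ∀ i : ℤ, 0 < i → 𝒜 i = ⊥)
    (hbdd : ∃ N : ℤ, ∀ i : ℤ, i < N → 𝒜 i = ⊥) :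
    RightDgNoetherian 𝒜 d ↔
      (IsNoetherianRing (↥(𝒜 0))ᵐᵒᵖ ∧
        ∀ n : ℤ, letI := gradeModule 𝒜 n; Module.Finite (↥(𝒜 0))ᵐᵒᵖ ↥(𝒜 n)) := by
  constructor
  · intro hN
    have hR := Statement12Aux.ringNoeth 𝒜 d hd1 hleib hnonpos hN
    exact ⟨hR, Statement12Aux.allFG 𝒜 d hd1 hleib hnonpos hN hR⟩
  · rintro ⟨hR, hF⟩
    exact Statement12Aux.backward 𝒜 d hnonpos hbdd hR hF
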